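/- Let b_1, b_2 be nonzero real numbers, y_1, y_2 real numbers, β, γ real orders, and m, n nonnegative integers. Then for every real x: Σ_{a=0}^{m+n+1} (−1)^a C(m+n+1, a) b_1^a b_2^{m+n+1−a} E_{m+n+1−a}^{(γ)}(b_1 x + y_1) E_a^{(β)}(b_2 x + y_2) = Σ_{a=0}^{m+n+1} (−1)^a C(m+n+1, a) b_1^a b_2^{m+n+1−a} E_{m+n+1−a}^{(γ)}(y_1) E_a^{(β)}(y_2); that is, this alternating binomial sum is independent of x. -/

import Mathlib

open Finset

private lemma myIteratedDeriv_add {n : ℕ} {f g : ℝ → ℝ} (hf : ContDiff ℝ n f)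
    (hg : ContDiff ℝ n g) (x : ℝ) :
    iteratedDeriv n (fun u => f u + g u) x = iteratedDeriv n f x + iteratedDeriv n g x := by
  have := iteratedDerivWithin_add (Set.mem_univ x) uniqueDiffOn_univ
    hf.contDiffWithinAt hg.contDiffWithinAt
  simpa [iteratedDerivWithin_univ, Pi.add_def] using this

private lemma myLeibniz : ∀ (n : ℕ) (f g : ℝ → ℝ), ContDiff ℝ (⊤ : ℕ∞) f →
    ContDiff ℝ (⊤ : ℕ∞) g → ∀ x : ℝ,
    iteratedDeriv n (fun u => f u * g u) x
      = ∑ k ∈ range (n + 1),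
          (n.choose k : ℝ) * iteratedDeriv (n - k) f x * iteratedDeriv k g x := by
  intro n
  induction n with
  | zero => intro f g hf hg x; simp
  | succ n ih =>
    intro f g hf hg x
    have hf' : ContDiff ℝ (⊤ : ℕ∞) (deriv f) := (contDiff_infty_iff_deriv.mp hf).2
    have hg' : ContDiff ℝ (⊤ : ℕ∞) (deriv g) := (contDiff_infty_iff_deriv.mp hg).2
    have hstep : iteratedDeriv (n + 1) (fun u => f u * g u) x
        = iteratedDeriv n (fun u => deriv f u * g u) x
          + iteratedDeriv n (fun u => f u * deriv g u) x := by
      rw [iteratedDeriv_succ']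
      have hd : deriv (fun u => f u * g u)
          = fun u => deriv f u * g u + f u * deriv g u := by
        funext u
        exact deriv_mul (hf.differentiable (by simp) u)
          (hg.differentiable (by simp) u)
      rw [hd]
      exact myIteratedDeriv_add
        ((hf'.mul hg).of_le (by exact_mod_cast le_top))
        ((hf.mul hg').of_le (by exact_mod_cast le_top)) x
    rw [hstep, ih _ _ hf' hg x, ih _ _ hf hg' x]
    -- rewrite derivatives of deriv as higher iterated derivs
    have e1 : ∀ k, iteratedDeriv (n - k) (deriv f) x = iteratedDeriv (n - k + 1) f x := by
      intro k; rw [iteratedDeriv_succ']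
    have e2 : ∀ k, iteratedDeriv k (deriv g) x = iteratedDeriv (k + 1) g x := by
      intro k; rw [iteratedDeriv_succ']
    simp only [e1, e2]
    -- now pure sum manipulation
    rw [Finset.sum_range_succ' (fun k =>
      ((n+1).choose k : ℝ) * iteratedDeriv (n + 1 - k) f x * iteratedDeriv k g x) (n+1)]
    rw [Finset.sum_range_succ' (fun k =>
      (n.choose k : ℝ) * iteratedDeriv (n - k + 1) f x * iteratedDeriv k g x) n]
    have hcast : ∀ k ∈ range (n+1),
        ((n+1).choose (k+1) : ℝ) * iteratedDeriv (n + 1 - (k+1)) f x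
            * iteratedDeriv (k+1) g x
        = (n.choose k : ℝ) * iteratedDeriv (n - k) f x * iteratedDeriv (k+1) g x
          + (n.choose (k+1) : ℝ) * iteratedDeriv (n - k) f x * iteratedDeriv (k+1) g x := by
      intro k hk
      rw [Nat.succ_sub_succ, Nat.choose_succ_succ]
      push_cast
      ring
    rw [Finset.sum_congr rfl hcast, Finset.sum_add_distrib]
    -- compare the two "C(n,k+1)" sums : they differ by a zero top term
    have hz : ∑ k ∈ range (n+1),
        (n.choose (k+1) : ℝ) * iteratedDeriv (n - k) f x * iteratedDeriv (k+1) g x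
        = ∑ k ∈ range n,
        (n.choose (k+1) : ℝ) * iteratedDeriv (n - k) f x * iteratedDeriv (k+1) g x := by
      rw [Finset.sum_range_succ]
      simp
    have hsh : ∀ k ∈ range n,
        (n.choose (k+1) : ℝ) * iteratedDeriv (n - (k+1) + 1) f x * iteratedDeriv (k+1) g x
        = (n.choose (k+1) : ℝ) * iteratedDeriv (n - k) f x * iteratedDeriv (k+1) g x := by
      intro k hk
      have hk' := Finset.mem_range.mp hk
      have : n - (k+1) + 1 = n - k := by omega
      rw [this]
    rw [Finset.sum_congr rfl hsh]
    simp only [Nat.choose_zero_right, Nat.cast_one, Nat.sub_zero, hz]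
    push_cast
    ring

/-- Higher-order Euler polynomial `E_m^{(α)}(z)` of real order `α`, defined as the `m`-th
Taylor coefficient (times `m!`) of the generating function `(2/(e^u+1))^α e^{uz}` at `u = 0`. -/
noncomputable def eulerH (α : ℝ) (m : ℕ) (z : ℝ) : ℝ :=
  iteratedDeriv m (fun u : ℝ => (2 / (Real.exp u + 1)) ^ α * Real.exp (u * z)) 0

private lemma eulerGen_contDiff (α z : ℝ) :
    ContDiff ℝ (⊤ : ℕ∞) (fun u : ℝ => (2 / (Real.exp u + 1)) ^ α * Real.exp (u * z)) := by
  have hbase : ContDiff ℝ (⊤ : ℕ∞) (fun u : ℝ => 2 / (Real.exp u + 1)) :=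
    contDiff_const.div (Real.contDiff_exp.add contDiff_const)
      (fun u => by positivity)
  have h1 : ContDiff ℝ (⊤ : ℕ∞) (fun u : ℝ => (2 / (Real.exp u + 1)) ^ α) :=
    hbase.rpow contDiff_const (fun u => by positivity)
  exact h1.mul (ContDiff.exp (contDiff_id.mul contDiff_const))

private lemma scaled_iteratedDeriv (α z c : ℝ) (k : ℕ) :
    iteratedDeriv k
        (fun u : ℝ => (2 / (Real.exp (c * u) + 1)) ^ α * Real.exp ((c * u) * z)) 0
      = c ^ k * eulerH α k z := by
  have h := iteratedDeriv_comp_const_mul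
    ((eulerGen_contDiff α z).of_le (by exact_mod_cast le_top : (k : WithTop ℕ∞) ≤ _)) c
    (f := fun u : ℝ => (2 / (Real.exp u + 1)) ^ α * Real.exp (u * z))
  have := congrFun h 0
  simpa [eulerH, mul_zero] using this

theorem stmt_8 (b₁ b₂ : ℝ) (hb₁ : b₁ ≠ 0) (hb₂ : b₂ ≠ 0) (y₁ y₂ β γ : ℝ) (m n : ℕ) (x : ℝ) :
    ∑ a ∈ Finset.range (m + n + 2), (-1 : ℝ) ^ a * (Nat.choose (m + n + 1) a : ℝ) *
        b₁ ^ a * b₂ ^ (m + n + 1 - a) *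
        eulerH γ (m + n + 1 - a) (b₁ * x + y₁) * eulerH β a (b₂ * x + y₂)
      = ∑ a ∈ Finset.range (m + n + 2), (-1 : ℝ) ^ a * (Nat.choose (m + n + 1) a : ℝ) *
        b₁ ^ a * b₂ ^ (m + n + 1 - a) *
        eulerH γ (m + n + 1 - a) y₁ * eulerH β a y₂ := by
  set N := m + n + 1 with hN
  -- the two scaled generating functions, for a generic pair of shifts
  have key : ∀ z₁ z₂ : ℝ,
      iteratedDeriv N (fun u : ℝ =>
        ((2 / (Real.exp (b₂ * u) + 1)) ^ γ * Real.exp ((b₂ * u) * z₁)) *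
        ((2 / (Real.exp (-b₁ * u) + 1)) ^ β * Real.exp ((-b₁ * u) * z₂))) 0
      = ∑ a ∈ Finset.range (N + 1), (-1 : ℝ) ^ a * (N.choose a : ℝ) *
          b₁ ^ a * b₂ ^ (N - a) * eulerH γ (N - a) z₁ * eulerH β a z₂ := by
    intro z₁ z₂
    have hG₁ : ContDiff ℝ (⊤ : ℕ∞) (fun u : ℝ =>
        (2 / (Real.exp (b₂ * u) + 1)) ^ γ * Real.exp ((b₂ * u) * z₁)) :=
      (eulerGen_contDiff γ z₁).comp (contDiff_const.mul contDiff_id)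
    have hG₂ : ContDiff ℝ (⊤ : ℕ∞) (fun u : ℝ =>
        (2 / (Real.exp (-b₁ * u) + 1)) ^ β * Real.exp ((-b₁ * u) * z₂)) :=
      (eulerGen_contDiff β z₂).comp (contDiff_const.mul contDiff_id)
    rw [myLeibniz N _ _ hG₁ hG₂ 0]
    refine Finset.sum_congr rfl ?_
    intro a ha
    rw [scaled_iteratedDeriv γ z₁ b₂ (N - a), scaled_iteratedDeriv β z₂ (-b₁) a]
    rw [neg_pow]
    ring
  have hfun : (fun u : ℝ =>
        ((2 / (Real.exp (b₂ * u) + 1)) ^ γ * Real.exp ((b₂ * u) * (b₁ * x + y₁))) *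
        ((2 / (Real.exp (-b₁ * u) + 1)) ^ β * Real.exp ((-b₁ * u) * (b₂ * x + y₂))))
      = (fun u : ℝ =>
        ((2 / (Real.exp (b₂ * u) + 1)) ^ γ * Real.exp ((b₂ * u) * y₁)) *
        ((2 / (Real.exp (-b₁ * u) + 1)) ^ β * Real.exp ((-b₁ * u) * y₂))) := by
    funext u
    have hE : Real.exp ((b₂ * u) * (b₁ * x + y₁)) * Real.exp ((-b₁ * u) * (b₂ * x + y₂))
        = Real.exp ((b₂ * u) * y₁) * Real.exp ((-b₁ * u) * y₂) := by
      rw [← Real.exp_add, ← Real.exp_add]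
      congr 1
      ring
    calc ((2 / (Real.exp (b₂ * u) + 1)) ^ γ * Real.exp ((b₂ * u) * (b₁ * x + y₁))) *
        ((2 / (Real.exp (-b₁ * u) + 1)) ^ β * Real.exp ((-b₁ * u) * (b₂ * x + y₂)))
        = ((2 / (Real.exp (b₂ * u) + 1)) ^ γ * (2 / (Real.exp (-b₁ * u) + 1)) ^ β) *
          (Real.exp ((b₂ * u) * (b₁ * x + y₁)) * Real.exp ((-b₁ * u) * (b₂ * x + y₂))) := by
          ring
      _ = ((2 / (Real.exp (b₂ * u) + 1)) ^ γ * (2 / (Real.exp (-b₁ * u) + 1)) ^ β) *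
          (Real.exp ((b₂ * u) * y₁) * Real.exp ((-b₁ * u) * y₂)) := by rw [hE]
      _ = _ := by ring
  have h1 := key (b₁ * x + y₁) (b₂ * x + y₂)
  have h2 := key y₁ y₂
  rw [hfun] at h1
  have : (N : ℕ) + 1 = m + n + 2 := by omega
  rw [this] at h1 h2
  rw [← h1, ← h2]
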